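/- Let (X, dist) be a metric space, let Y ⊆ X have diameter at most 1, let z ≥ 1 be an integer, α > 0, e ≥ 0, and k' ≥ 1 an integer. Let P be a finite multiset of points of Y, let s_1, …, s_{k'} ∈ Y, and let P = P_1 ⊔ … ⊔ P_{k'} be a partition of P. Let n_1, …, n_{k'} ≥ 0 be reals with |n_i − |P_i|| ≤ e for each i. Then for every nonempty finite set Γ ⊆ Y, ∑_{i=1}^{k'} n_i·dist(s_i, Γ)^z ≤ (1+1/α)^{z−1}·∑_{i=1}^{k'} ∑_{p∈P_i} dist(p, s_i)^z + (1+α)^{z−1}·∑_{p∈P} dist(p, Γ)^z + k'·e. -/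

import Mathlib

lemma key_pow (z : ℕ) (hz : 1 ≤ z) (α : ℝ) (hα : 0 < α) (a b : ℝ) (ha : 0 ≤ a) (hb : 0 ≤ b) :
    (a + b) ^ z ≤ (1 + α) ^ (z - 1) * a ^ z + (1 + 1 / α) ^ (z - 1) * b ^ z := by
  have hα1 : (0:ℝ) < 1 + α := by linarith
  have hα1' : (1:ℝ) + α ≠ 0 := ne_of_gt hα1
  have hα' : α ≠ 0 := ne_of_gt hα
  have hl : (0:ℝ) ≤ 1 / (1 + α) := by positivity
  have hm : (0:ℝ) ≤ α / (1 + α) := by positivity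
  have hsum : 1 / (1 + α) + α / (1 + α) = 1 := by field_simp
  have hx : (1 + α) * a ∈ Set.Ici (0:ℝ) := by
    simp only [Set.mem_Ici]; positivity
  have hy : (1 + 1/α) * b ∈ Set.Ici (0:ℝ) := by
    simp only [Set.mem_Ici]; positivity
  have h := (convexOn_pow z).2 hx hy hl hm hsum
  simp only [smul_eq_mul] at h
  have harg : 1 / (1 + α) * ((1 + α) * a) + α / (1 + α) * ((1 + 1/α) * b) = a + b := by
    field_simp
    ring
  rw [harg] at h
  refine h.trans_eq ?_
  have hz' : z = (z - 1) + 1 := (Nat.succ_pred_eq_of_pos hz).symm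
  have e1 : 1 / (1 + α) * ((1 + α) * a) ^ z = (1 + α) ^ (z-1) * a ^ z := by
    rw [mul_pow, hz', pow_succ]
    simp only [Nat.add_sub_cancel]
    field_simp
  have e2 : α / (1 + α) * ((1 + 1/α) * b) ^ z = (1 + 1/α) ^ (z-1) * b ^ z := by
    rw [mul_pow, hz', pow_succ]
    simp only [Nat.add_sub_cancel]
    rw [div_mul_eq_mul_div, div_eq_iff hα1']
    have : ((1:ℝ) + 1/α) = (1+α)/α := by field_simp; ring
    rw [this]
    field_simp
  rw [e1, e2]

lemma multiset_sum_map_finset_sum {ι β γ : Type*} [AddCommMonoid γ] (t : Finset ι)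
    (m : ι → Multiset β) (g : β → γ) :
    ((∑ i ∈ t, m i).map g).sum = ∑ i ∈ t, ((m i).map g).sum := by
  classical
  induction t using Finset.induction with
  | empty => simp
  | insert _ _ h ih => simp [Finset.sum_insert h, ih]

/-- **Cost of the weighted centers against any solution.** Let `Y` be a subset of a
metric space `X` of diameter at most `1`, let `z ≥ 1` be an integer, `α > 0`, `e ≥ 0`,
and `k' ≥ 1`.  Let `P = P_1 ⊔ … ⊔ P_{k'}` be a finite multiset of points of `Y`
partitioned into `k'` parts, let `s_1, …, s_{k'} ∈ Y`, and let `n_1, …, n_{k'} ≥ 0` be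
reals with `|n_i − |P_i|| ≤ e` for each `i`.  Then for every nonempty finite `Γ ⊆ Y`,
`∑_i n_i·dist(s_i, Γ)^z
  ≤ (1+1/α)^{z−1}·∑_i ∑_{p∈P_i} dist(p, s_i)^z
    + (1+α)^{z−1}·∑_{p∈P} dist(p, Γ)^z + k'·e`. -/
theorem weighted_centers_cost_bound {X : Type*} [MetricSpace X] (Y : Set X)
    (hY : ∀ x ∈ Y, ∀ y ∈ Y, dist x y ≤ 1)
    (z : ℕ) (hz : 1 ≤ z) (α : ℝ) (hα : 0 < α) (e : ℝ) (he : 0 ≤ e)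
    (k' : ℕ) (hk' : 1 ≤ k')
    (Pi : Fin k' → Multiset X) (hPY : ∀ i, ∀ p ∈ Pi i, p ∈ Y)
    (s : Fin k' → X) (hs : ∀ i, s i ∈ Y)
    (n : Fin k' → ℝ) (hn0 : ∀ i, 0 ≤ n i)
    (hne : ∀ i, |n i - ((Pi i).card : ℝ)| ≤ e)
    (Γ : Finset X) (hΓ : Γ.Nonempty) (hΓY : ↑Γ ⊆ Y) :
    ∑ i, n i * Metric.infDist (s i) (↑Γ : Set X) ^ z
      ≤ (1 + 1 / α) ^ (z - 1)
            * ∑ i, ((Pi i).map (fun p => dist p (s i) ^ z)).sum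
        + (1 + α) ^ (z - 1)
            * ((∑ i, Pi i).map (fun p => Metric.infDist p (↑Γ : Set X) ^ z)).sum
        + k' * e := by
  classical
  set c1 : ℝ := (1 + 1 / α) ^ (z - 1) with hc1
  set c2 : ℝ := (1 + α) ^ (z - 1) with hc2
  set D : Fin k' → ℝ := fun i => Metric.infDist (s i) (↑Γ : Set X) with hD
  obtain ⟨γ, hγ⟩ := hΓ
  have hγY : γ ∈ Y := hΓY hγ
  have hD0 : ∀ i, 0 ≤ D i := fun i => Metric.infDist_nonneg
  have hD1 : ∀ i, D i ≤ 1 := fun i =>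
    le_trans (Metric.infDist_le_dist_of_mem (by exact_mod_cast hγ)) (hY _ (hs i) _ hγY)
  -- per-cluster bound
  have main : ∀ i, n i * D i ^ z ≤
      c1 * ((Pi i).map (fun p => dist p (s i) ^ z)).sum
        + c2 * ((Pi i).map (fun p => Metric.infDist p (↑Γ : Set X) ^ z)).sum + e := by
    intro i
    have hDz0 : 0 ≤ D i ^ z := pow_nonneg (hD0 i) z
    have hDz1 : D i ^ z ≤ 1 := pow_le_one₀ (hD0 i) (hD1 i)
    have step1 : n i * D i ^ z ≤ ((Pi i).card : ℝ) * D i ^ z + e := by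
      have h1 : n i ≤ ((Pi i).card : ℝ) + e := by
        have := (abs_sub_le_iff.mp (hne i)).1; linarith
      calc n i * D i ^ z ≤ (((Pi i).card : ℝ) + e) * D i ^ z :=
            mul_le_mul_of_nonneg_right h1 hDz0
        _ = ((Pi i).card : ℝ) * D i ^ z + e * D i ^ z := by ring
        _ ≤ ((Pi i).card : ℝ) * D i ^ z + e := by nlinarith
    have step2 : ((Pi i).card : ℝ) * D i ^ z ≤
        ((Pi i).map (fun p =>
          c1 * dist p (s i) ^ z + c2 * Metric.infDist p (↑Γ : Set X) ^ z)).sum := by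
      have hconst : ((Pi i).map (fun _ => D i ^ z)).sum = ((Pi i).card : ℝ) * D i ^ z := by
        simp [Multiset.map_const', Multiset.sum_replicate, nsmul_eq_mul]
      rw [← hconst]
      apply Multiset.sum_map_le_sum_map
      intro p hp
      have htri : D i ≤ Metric.infDist p (↑Γ : Set X) + dist p (s i) := by
        have h := Metric.infDist_le_infDist_add_dist (x := s i) (y := p) (s := (↑Γ : Set X))
        rw [dist_comm (s i) p] at h
        exact h
      have hpow : D i ^ z ≤ (Metric.infDist p (↑Γ : Set X) + dist p (s i)) ^ z :=
        pow_le_pow_left₀ (hD0 i) htri z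
      refine hpow.trans ?_
      have := key_pow z hz α hα (Metric.infDist p (↑Γ : Set X)) (dist (s i) p)
        Metric.infDist_nonneg dist_nonneg
      rw [dist_comm (s i) p] at this
      linarith
    have hsplit : ((Pi i).map (fun p =>
          c1 * dist p (s i) ^ z + c2 * Metric.infDist p (↑Γ : Set X) ^ z)).sum
        = c1 * ((Pi i).map (fun p => dist p (s i) ^ z)).sum
          + c2 * ((Pi i).map (fun p => Metric.infDist p (↑Γ : Set X) ^ z)).sum := by
      rw [Multiset.sum_map_add, Multiset.sum_map_mul_left, Multiset.sum_map_mul_left]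
    linarith [step1, step2, hsplit ▸ step2]
  calc ∑ i, n i * D i ^ z
      ≤ ∑ i, (c1 * ((Pi i).map (fun p => dist p (s i) ^ z)).sum
          + c2 * ((Pi i).map (fun p => Metric.infDist p (↑Γ : Set X) ^ z)).sum + e) :=
        Finset.sum_le_sum fun i _ => main i
    _ = c1 * ∑ i, ((Pi i).map (fun p => dist p (s i) ^ z)).sum
          + c2 * ((∑ i, Pi i).map (fun p => Metric.infDist p (↑Γ : Set X) ^ z)).sum
          + k' * e := by
        rw [multiset_sum_map_finset_sum]
        simp [Finset.sum_add_distrib, Finset.mul_sum, Finset.card_univ]
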